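/- Suppose every agent satisfies ⌊μ_i/n⌋ ≥ 1. Then for any proportional outcome o, the utilitarian welfare of o is at least a 1/(2n−1) fraction of the maximum possible utilitarian welfare, i.e., Σ_i u_i(o) ≥ (Σ_i μ_i)/(2n−1). -/
import Mathlib


/-- The utility of agent `i` under outcome `o`. -/
noncomputable def util {P : Type*} {n ℓ : ℕ}
    (S : Fin n → Fin ℓ → Finset P) (i : Fin n) (o : Fin ℓ → P) : ℕ :=
  Nat.card {t : Fin ℓ // o t ∈ S i t}

/-- `μ_i`: the number of timesteps at which agent `i` approves at least one project. -/
noncomputable def mu {P : Type*} {n ℓ : ℕ}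
    (S : Fin n → Fin ℓ → Finset P) (i : Fin n) : ℕ :=
  Nat.card {t : Fin ℓ // S i t ≠ ∅}

/-- If every agent satisfies `⌊μ_i/n⌋ ≥ 1`, then any proportional outcome `o` has
utilitarian welfare at least a `1/(2n−1)` fraction of the maximum possible
utilitarian welfare: `Σ_i u_i(o) ≥ (Σ_i μ_i)/(2n−1)`. -/
theorem prop_util_bound {P : Type*} {n ℓ : ℕ} (hn : 1 ≤ n)
    (S : Fin n → Fin ℓ → Finset P)
    (hmu : ∀ i : Fin n, 1 ≤ mu S i / n)
    (o : Fin ℓ → P)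
    (hprop : ∀ i : Fin n, mu S i / n ≤ util S i o) :
    ((∑ i : Fin n, mu S i : ℕ) : ℚ) / ((2 * n - 1 : ℕ) : ℚ) ≤
      ((∑ i : Fin n, util S i o : ℕ) : ℚ) := by
  have key : ∀ i : Fin n, mu S i ≤ (2 * n - 1) * util S i o := by
    intro i
    have hu1 : 1 ≤ util S i o := le_trans (hmu i) (hprop i)
    have h1 : mu S i ≤ n * util S i o + (n - 1) := by
      calc mu S i = n * (mu S i / n) + mu S i % n := by
            exact (Nat.div_add_mod _ _).symm
        _ ≤ n * util S i o + (n - 1) := by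
            have := Nat.mod_lt (mu S i) (show 0 < n by omega)
            have := Nat.mul_le_mul_left n (hprop i)
            omega
    have h2 : n - 1 ≤ (n - 1) * util S i o := Nat.le_mul_of_pos_right _ hu1
    have : n * util S i o + (n - 1) * util S i o = (2 * n - 1) * util S i o := by
      rw [← Nat.add_mul]; congr 1; omega
    omega
  have hsum : (∑ i : Fin n, mu S i) ≤ (2 * n - 1) * ∑ i : Fin n, util S i o := by
    rw [Finset.mul_sum]
    exact Finset.sum_le_sum fun i _ => key i
  have hpos : (0 : ℚ) < ((2 * n - 1 : ℕ) : ℚ) := by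
    have : 1 ≤ 2 * n - 1 := by omega
    exact_mod_cast Nat.lt_of_lt_of_le Nat.zero_lt_one this
  rw [div_le_iff₀ hpos]
  calc ((∑ i : Fin n, mu S i : ℕ) : ℚ) ≤ (((2 * n - 1) * ∑ i : Fin n, util S i o : ℕ) : ℚ) := by
        exact_mod_cast hsum
    _ = _ := by push_cast; ring
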